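/- arXiv:2003.09631 — 2 statements merged into one kernel-verified Lean document; each statement's English description precedes it below -/
import Mathlib

section
/- Let A be a self-adjoint operator on a Hilbert space H with strictly positive lower bound m(A) > 0. Then for every h in H, the supremum over nonzero f in the domain of A of |⟨f,h⟩|²/⟨f,Af⟩ equals ⟨h, A⁻¹h⟩. -/
open scoped InnerProductSpace
open MeasureTheory

lemma cs_aux {H : Type*} [NormedAddCommGroup H] [InnerProductSpace ℂ H]
    (A : H →ₗ.[ℂ] H)
    (hsym : ∀ x y : A.domain, ⟪(A x : H), (y : H)⟫_ℂ = ⟪(x : H), A y⟫_ℂ)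
    (m : ℝ) (hm : 0 < m)
    (hlow : ∀ f : A.domain, m * ‖(f : H)‖ ^ 2 ≤ (⟪(f : H), A f⟫_ℂ).re)
    (f g : A.domain) (hf : (f : H) ≠ 0) :
    ‖⟪(f : H), A g⟫_ℂ‖ ^ 2 ≤ (⟪(f : H), A f⟫_ℂ).re * (⟪(g : H), A g⟫_ℂ).re := by
  set a : ℝ := (⟪(f : H), A f⟫_ℂ).re with ha
  have hfa : 0 < a :=
    lt_of_lt_of_le (mul_pos hm (pow_pos (norm_pos_iff.mpr hf) 2)) (hlow f)
  set b : ℂ := ⟪(f : H), A g⟫_ℂ with hb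
  have hff : ⟪(f : H), A f⟫_ℂ = (a : ℂ) := by
    have h1 : (starRingEnd ℂ) ⟪(f : H), A f⟫_ℂ = ⟪(f : H), A f⟫_ℂ := by
      rw [inner_conj_symm, hsym]
    exact (Complex.conj_eq_iff_re.mp h1).symm
  have hconj : ⟪(g : H), A f⟫_ℂ = (starRingEnd ℂ) b := by
    rw [hb, ← hsym f g, ← inner_conj_symm]
  set w : A.domain := (a : ℂ) • g - b • f with hw
  have hAw : (A w : H) = (a : ℂ) • (A g : H) - b • (A f : H) := by
    rw [hw, A.map_sub, A.map_smul, A.map_smul]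
  have hwc : ((w : H)) = (a : ℂ) • (g : H) - b • (f : H) := rfl
  have hpos : 0 ≤ (⟪(w : H), A w⟫_ℂ).re :=
    le_trans (by positivity) (hlow w)
  have hbb : (starRingEnd ℂ) b * b = ((‖b‖ : ℝ) : ℂ) ^ 2 := by
    rw [RCLike.conj_mul]; norm_cast
  have hval : ⟪(w : H), A w⟫_ℂ
      = ((a ^ 2 : ℝ) : ℂ) * ⟪(g : H), A g⟫_ℂ - ((a * ‖b‖ ^ 2 : ℝ) : ℂ) := by
    rw [hwc, hAw]
    simp only [inner_sub_left, inner_sub_right, inner_smul_left, inner_smul_right,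
      Complex.conj_ofReal, hconj, hff, ← hb]
    push_cast
    linear_combination (-(a : ℂ)) * hbb
  have hre : (⟪(w : H), A w⟫_ℂ).re = a ^ 2 * (⟪(g : H), A g⟫_ℂ).re - a * ‖b‖ ^ 2 := by
    rw [hval, Complex.sub_re, Complex.re_ofReal_mul, Complex.ofReal_re]
  nlinarith [hpos, hre, hfa]

/-- For a self-adjoint operator `A` on a complex Hilbert space with
strictly positive lower bound (`m * ‖f‖² ≤ ⟨f, Af⟩` for some `m > 0`), and bounded
everywhere-defined inverse `Ainv`, the supremum over nonzero `f` in the domain of `A`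
of `|⟨f,h⟩|²/⟨f,Af⟩` equals `⟨h, A⁻¹ h⟩`. -/
theorem stmt0
    {H : Type*} [NormedAddCommGroup H] [InnerProductSpace ℂ H] [CompleteSpace H]
    (A : H →ₗ.[ℂ] H) (hA : IsSelfAdjoint A)
    (m : ℝ) (hm : 0 < m)
    (hlow : ∀ f : A.domain, m * ‖(f : H)‖ ^ 2 ≤ (⟪(f : H), A f⟫_ℂ).re)
    (Ainv : H →L[ℂ] H)
    (hAinv_mem : ∀ h : H, Ainv h ∈ A.domain)
    (hAinv_right : ∀ h : H, A ⟨Ainv h, hAinv_mem h⟩ = h)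
    (hAinv_left : ∀ f : A.domain, Ainv (A f) = (f : H))
    (h : H) :
    sSup {r : ℝ | ∃ f : A.domain, (f : H) ≠ 0 ∧
        r = ‖⟪(f : H), h⟫_ℂ‖ ^ 2 / (⟪(f : H), A f⟫_ℂ).re} =
      (⟪h, Ainv h⟫_ℂ).re := by
  have hsym : ∀ x y : A.domain, ⟪(A x : H), (y : H)⟫_ℂ = ⟪(x : H), A y⟫_ℂ := by
    have hd : Dense (A.domain : Set H) := hA.dense_domain
    have h1 := LinearPMap.adjoint_isFormalAdjoint (T := A) hd
    rw [LinearPMap.isSelfAdjoint_def.mp hA] at h1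
    exact h1
  set S := {r : ℝ | ∃ f : A.domain, (f : H) ≠ 0 ∧
      r = ‖⟪(f : H), h⟫_ℂ‖ ^ 2 / (⟪(f : H), A f⟫_ℂ).re} with hS
  by_cases hh : h = 0
  · subst hh
    have hsub : S ⊆ {0} := by
      rintro r ⟨f, hf, rfl⟩
      simp
    rcases Set.subset_singleton_iff_eq.mp hsub with h0 | h0 <;> rw [h0] <;> simp
  · set g : A.domain := ⟨Ainv h, hAinv_mem h⟩ with hg
    have hAg : A g = h := hAinv_right h
    have hgne : (g : H) ≠ 0 := by
      intro hz
      apply hh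
      rw [← hAg]
      have : g = 0 := Subtype.ext hz
      rw [this, A.map_zero]
    have hRHS : (⟪h, Ainv h⟫_ℂ).re = (⟪(g : H), A g⟫_ℂ).re := by
      rw [hAg, ← inner_conj_symm, Complex.conj_re]
    set c : ℝ := (⟪(g : H), A g⟫_ℂ).re with hc
    have hcpos : 0 < c :=
      lt_of_lt_of_le (mul_pos hm (pow_pos (norm_pos_iff.mpr hgne) 2)) (hlow g)
    have hggreal : ⟪(g : H), A g⟫_ℂ = (c : ℂ) := by
      have h1 : (starRingEnd ℂ) ⟪(g : H), A g⟫_ℂ = ⟪(g : H), A g⟫_ℂ := by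
        rw [inner_conj_symm, hsym]
      exact (Complex.conj_eq_iff_re.mp h1).symm
    have hmem : c ∈ S := by
      refine ⟨g, hgne, ?_⟩
      rw [← hAg, hggreal]
      simp only [Complex.ofReal_re, Complex.norm_real]
      rw [Real.norm_eq_abs, abs_of_pos hcpos]
      field_simp
    have hub : ∀ r ∈ S, r ≤ c := by
      rintro r ⟨f, hf, rfl⟩
      have hfpos : 0 < (⟪(f : H), A f⟫_ℂ).re :=
        lt_of_lt_of_le (mul_pos hm (pow_pos (norm_pos_iff.mpr hf) 2)) (hlow f)
      rw [div_le_iff₀ hfpos]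
      rw [← hAg]
      calc ‖⟪(f : H), A g⟫_ℂ‖ ^ 2 ≤ (⟪(f : H), A f⟫_ℂ).re * (⟪(g : H), A g⟫_ℂ).re :=
            cs_aux A hsym m hm hlow f g hf
        _ = c * (⟪(f : H), A f⟫_ℂ).re := by rw [← hc]; ring
    rw [hRHS]
    exact le_antisymm (csSup_le ⟨c, hmem⟩ hub) (le_csSup ⟨c, fun r hr => hub r hr⟩ hmem)
end

section
/- Define F(λ) = 12 - 6√λ (1 + cos√λ)/sin√λ for λ ∈ (0, π²). Then F is strictly increasing on (0, π²) and lim_{λ↑π²} F(λ) = 12. Consequently, for t ≥ 12 the equation F(λ) = t has no solution λ ∈ (0, π²). -/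
open Real Set Filter

/-- The secular function `F(λ) = 12 - 6√λ(1 + cos√λ)/sin√λ`. -/
noncomputable def Fsec : ℝ → ℝ :=
  fun lam => 12 - 6 * Real.sqrt lam * (1 + Real.cos (Real.sqrt lam)) / Real.sin (Real.sqrt lam)

noncomputable def gsec : ℝ → ℝ := fun x => x * Real.cos (x/2) / Real.sin (x/2)

lemma sin_half_pos {x : ℝ} (hx : x ∈ Ioo 0 π) : 0 < Real.sin (x/2) :=
  Real.sin_pos_of_pos_of_lt_pi (by linarith [hx.1]) (by linarith [hx.2, Real.pi_pos])

lemma cos_half_pos {x : ℝ} (hx : x ∈ Ioo 0 π) : 0 < Real.cos (x/2) :=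
  Real.cos_pos_of_mem_Ioo ⟨by linarith [hx.1, Real.pi_pos], by linarith [hx.2]⟩

lemma sin_eq {x : ℝ} : Real.sin x = 2 * Real.sin (x/2) * Real.cos (x/2) := by
  have := Real.sin_two_mul (x/2)
  rw [show (2:ℝ) * (x/2) = x by ring] at this
  linarith

lemma cos_eq {x : ℝ} : Real.cos x = 2 * Real.cos (x/2)^2 - 1 := by
  have := Real.cos_two_mul (x/2)
  rw [show (2:ℝ) * (x/2) = x by ring] at this
  linarith

lemma ident {x : ℝ} (hx : x ∈ Ioo 0 π) :
    x * (1 + Real.cos x) / Real.sin x = gsec x := by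
  have h2 := sin_half_pos hx
  have h3 := cos_half_pos hx
  unfold gsec
  rw [sin_eq (x := x), cos_eq (x := x)]
  field_simp
  ring

lemma Fsec_eq {lam : ℝ} (h : lam ∈ Ioo 0 (π ^ 2)) :
    Fsec lam = 12 - 6 * gsec (Real.sqrt lam) ∧ Real.sqrt lam ∈ Ioo 0 π := by
  have hmem : Real.sqrt lam ∈ Ioo 0 π := by
    constructor
    · exact Real.sqrt_pos.mpr h.1
    · have := Real.sqrt_lt_sqrt h.1.le h.2
      rwa [Real.sqrt_sq Real.pi_pos.le] at this
  refine ⟨?_, hmem⟩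
  unfold Fsec
  rw [show (6:ℝ) * Real.sqrt lam * (1 + Real.cos (Real.sqrt lam)) / Real.sin (Real.sqrt lam)
      = 6 * (Real.sqrt lam * (1 + Real.cos (Real.sqrt lam)) / Real.sin (Real.sqrt lam)) by ring,
    ident hmem]

lemma gsec_deriv {x : ℝ} (hx : x ∈ Ioo 0 π) :
    HasDerivAt gsec ((Real.sin x - x) / (2 * Real.sin (x/2)^2)) x := by
  have hs := sin_half_pos hx
  have hhalf : HasDerivAt (fun y : ℝ => y/2) (1/2) x := (hasDerivAt_id x).div_const 2
  have hcos : HasDerivAt (fun y : ℝ => Real.cos (y/2)) (-Real.sin (x/2) * (1/2)) x :=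
    by have := (Real.hasDerivAt_cos (x/2)).comp x hhalf; exact this
  have hsin : HasDerivAt (fun y : ℝ => Real.sin (y/2)) (Real.cos (x/2) * (1/2)) x :=
    by have := (Real.hasDerivAt_sin (x/2)).comp x hhalf; exact this
  have hnum : HasDerivAt (fun y : ℝ => y * Real.cos (y/2))
      (1 * Real.cos (x/2) + x * (-Real.sin (x/2) * (1/2))) x :=
    (hasDerivAt_id x).mul hcos
  have h := hnum.div hsin hs.ne'
  refine h.congr_deriv ?_
  have hpyth := Real.sin_sq_add_cos_sq (x/2)
  rw [sin_eq (x := x)]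
  field_simp
  linear_combination (-x) * hpyth

lemma gsec_anti : StrictAntiOn gsec (Ioo 0 π) := by
  apply strictAntiOn_of_deriv_neg (convex_Ioo 0 π)
  · intro x hx
    exact (gsec_deriv hx).continuousAt.continuousWithinAt
  · intro x hx
    rw [interior_Ioo] at hx
    rw [(gsec_deriv hx).deriv]
    have hs := sin_half_pos hx
    have : Real.sin x < x := Real.sin_lt hx.1
    apply div_neg_of_neg_of_pos (by linarith) (by positivity)

/-- `F` is strictly increasing on `(0, π²)` with
`lim_{λ↑π²} F(λ) = 12`; consequently, for `t ≥ 12` the equation `F(λ) = t` has no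
solution `λ ∈ (0, π²)`. -/
theorem stmt15 :
    StrictMonoOn Fsec (Ioo 0 (π ^ 2)) ∧
    Tendsto Fsec (nhdsWithin (π ^ 2) (Iio (π ^ 2))) (nhds 12) ∧
    ∀ t : ℝ, 12 ≤ t → ∀ lam ∈ Ioo (0:ℝ) (π ^ 2), Fsec lam ≠ t := by
  have hmono : StrictMonoOn Fsec (Ioo 0 (π ^ 2)) := by
    intro a ha b hb hab
    obtain ⟨hFa, hma⟩ := Fsec_eq ha
    obtain ⟨hFb, hmb⟩ := Fsec_eq hb
    rw [hFa, hFb]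
    have hlt : Real.sqrt a < Real.sqrt b := Real.sqrt_lt_sqrt ha.1.le hab
    have := gsec_anti hma hmb hlt
    linarith
  refine ⟨hmono, ?_, ?_⟩
  · -- limit
    have hsq : Tendsto Real.sqrt (nhdsWithin (π ^ 2) (Iio (π ^ 2))) (nhds π) := by
      have : ContinuousAt Real.sqrt (π ^ 2) := Real.continuous_sqrt.continuousAt
      have h1 : Tendsto Real.sqrt (nhdsWithin (π ^ 2) (Iio (π ^ 2))) (nhds (Real.sqrt (π ^ 2))) :=
        this.continuousWithinAt.tendsto
      rwa [Real.sqrt_sq Real.pi_pos.le] at h1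
    have hG : ContinuousAt (fun x : ℝ => 12 - 6 * gsec x) π := by
      have hs : Real.sin (π/2) ≠ 0 := by
        rw [Real.sin_pi_div_two]; norm_num
      unfold gsec
      fun_prop (disch := assumption)
    have hcomp : Tendsto (fun lam => 12 - 6 * gsec (Real.sqrt lam))
        (nhdsWithin (π ^ 2) (Iio (π ^ 2))) (nhds (12 - 6 * gsec π)) :=
      (hG.tendsto.comp hsq)
    have hval : (12 : ℝ) - 6 * gsec π = 12 := by
      unfold gsec
      rw [Real.cos_pi_div_two]
      ring_nf
    rw [hval] at hcomp
    apply hcomp.congr'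
    filter_upwards [self_mem_nhdsWithin,
        nhdsWithin_le_nhds (Ioi_mem_nhds (by positivity : (0:ℝ) < π ^ 2))] with lam h1 h2
    exact (Fsec_eq ⟨h2, h1⟩).1.symm
  · intro t ht lam hlam
    obtain ⟨hF, hm⟩ := Fsec_eq hlam
    have hpos : 0 < gsec (Real.sqrt lam) := by
      unfold gsec
      have := sin_half_pos hm
      have := cos_half_pos hm
      have h0 : 0 < Real.sqrt lam := hm.1
      positivity
    rw [hF]
    intro h
    linarith
end
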